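/- arXiv:1307.6951 — 3 statements merged into one kernel-verified Lean document; each statement's English description precedes it below -/
import Mathlib

section
/- Let s ∈ (0,1), a = 1/(2−s), and suppose a nonnegative measurable function w on a domain Ω satisfies (∫_Ω w dx)² ≥ K ∫_Ω w² dx for some K > 0. Then ∫_Ω w dx ≤ K^{−(1−s)/s} (∫_Ω w^s dx)^{1/s}. -/
open MeasureTheory
open scoped ENNReal

lemma memLp_rpow_of_integrable_aux {Ω : Type*} [MeasurableSpace Ω] {μ : Measure Ω} {g : Ω → ℝ}
    (hg : Integrable g μ) (hgnn : ∀ x, 0 ≤ g x) {c : ℝ} (hc : 0 < c) :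
    MemLp (fun x => g x ^ c) (ENNReal.ofReal (1 / c)) μ := by
  have h := (memLp_one_iff_integrable.mpr hg).norm_rpow_div (ENNReal.ofReal c)
  rw [ENNReal.toReal_ofReal hc.le] at h
  have he : (1 : ℝ≥0∞) / ENNReal.ofReal c = ENNReal.ofReal (1 / c) := by
    rw [one_div, one_div, ENNReal.ofReal_inv_of_pos hc]
  rw [he] at h
  have hfun : (fun x => ‖g x‖ ^ c) = fun x => g x ^ c := by
    funext x; rw [Real.norm_of_nonneg (hgnn x)]
  rwa [hfun] at h

theorem reverse_constraint_interpolation {Ω : Type*} [MeasurableSpace Ω] (μ : Measure Ω)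
    (w : Ω → ℝ) (s a K : ℝ) (hs : 0 < s) (hs1 : s < 1) (ha : a = 1 / (2 - s)) (hK : 0 < K)
    (hw : ∀ x, 0 ≤ w x) (hmeas : AEMeasurable w μ)
    (h1 : Integrable w μ) (h2 : Integrable (fun x => (w x) ^ 2) μ)
    (hs' : Integrable (fun x => (w x) ^ s) μ)
    (hconstraint : K * ∫ x, (w x) ^ 2 ∂μ ≤ (∫ x, w x ∂μ) ^ 2) :
    ∫ x, w x ∂μ ≤ K ^ (-(1 - s) / s) * (∫ x, (w x) ^ s ∂μ) ^ (1 / s) := by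
  have h2s : (0:ℝ) < 2 - s := by linarith
  have ha_pos : 0 < a := by rw [ha]; positivity
  have ha_lt1 : a < 1 := by
    rw [ha, div_lt_one h2s]; linarith
  have h1a : 0 < 1 - a := by linarith
  have hsa : 0 < s * a := by positivity
  -- Hölder's inequality
  have hF : MemLp (fun x => w x ^ (s * a)) (ENNReal.ofReal (1 / a)) μ := by
    have := memLp_rpow_of_integrable_aux (g := fun x => w x ^ s)
      hs' (fun x => Real.rpow_nonneg (hw x) s) ha_pos
    have hfun : (fun x => (w x ^ s) ^ a) = fun x => w x ^ (s * a) := by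
      funext x; rw [← Real.rpow_mul (hw x)]
    rwa [hfun] at this
  have hG : MemLp (fun x => w x ^ (2 * (1 - a))) (ENNReal.ofReal (1 / (1 - a))) μ := by
    have := memLp_rpow_of_integrable_aux (g := fun x => w x ^ 2)
      h2 (fun x => by positivity) h1a
    have hfun : (fun x => ((w x) ^ 2) ^ (1 - a)) = fun x => w x ^ (2 * (1 - a)) := by
      funext x
      rw [← Real.rpow_natCast (w x) 2, ← Real.rpow_mul (hw x)]
      norm_num
    rwa [hfun] at this
  have hpq : Real.HolderConjugate (1 / a) (1 / (1 - a)) := by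
    rw [Real.holderConjugate_iff]; constructor
    · rw [lt_div_iff₀ ha_pos]; linarith
    · rw [one_div, one_div, inv_inv, inv_inv]; ring
  have hH := integral_mul_le_Lp_mul_Lq_of_nonneg (μ := μ) hpq
    (f := fun x => w x ^ (s * a)) (g := fun x => w x ^ (2 * (1 - a)))
    (Filter.Eventually.of_forall fun x => Real.rpow_nonneg (hw x) _)
    (Filter.Eventually.of_forall fun x => Real.rpow_nonneg (hw x) _) hF hG
  have hexp : s * a + 2 * (1 - a) = 1 := by
    rw [ha]; field_simp; ring
  have e1 : ∀ x, w x ^ (s * a) * w x ^ (2 * (1 - a)) = w x := by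
    intro x
    rw [← Real.rpow_add_of_nonneg (hw x) hsa.le (by positivity), hexp, Real.rpow_one]
  have e2 : ∀ x, (w x ^ (s * a)) ^ (1 / a) = w x ^ s := by
    intro x
    rw [← Real.rpow_mul (hw x)]
    congr 1
    field_simp
  have e3 : ∀ x, (w x ^ (2 * (1 - a))) ^ (1 / (1 - a)) = w x ^ 2 := by
    intro x
    rw [← Real.rpow_mul (hw x), ← Real.rpow_natCast (w x) 2]
    congr 1
    push_cast
    field_simp
  simp only [e1, e2, e3, one_div_one_div] at hH
  -- abbreviations
  set I := ∫ x, w x ∂μ with hI_def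
  set A := ∫ x, w x ^ s ∂μ with hA_def
  set B := ∫ x, w x ^ 2 ∂μ with hB_def
  have hI : 0 ≤ I := integral_nonneg hw
  have hA : 0 ≤ A := integral_nonneg fun x => Real.rpow_nonneg (hw x) s
  have hB : 0 ≤ B := integral_nonneg fun x => by positivity
  rcases eq_or_lt_of_le hI with hI0 | hIpos
  · rw [← hI0]
    positivity
  · -- B ≤ I^2 / K
    have hBle : B ≤ I ^ 2 / K := by
      rw [le_div_iff₀ hK]; linarith [hconstraint]
    have hstep : I ≤ A ^ a * (I ^ (2 * (1 - a)) * K ^ (a - 1)) := by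
      have h4 : (I ^ 2 / K) ^ (1 - a) = I ^ (2 * (1 - a)) * K ^ (a - 1) := by
        rw [Real.div_rpow (by positivity) hK.le, ← Real.rpow_natCast I 2,
          ← Real.rpow_mul hI, div_eq_mul_inv, ← Real.rpow_neg hK.le, neg_sub]
        norm_num
      calc I ≤ A ^ a * B ^ (1 - a) := hH
        _ ≤ A ^ a * (I ^ 2 / K) ^ (1 - a) := by
            apply mul_le_mul_of_nonneg_left _ (Real.rpow_nonneg hA a)
            exact Real.rpow_le_rpow hB hBle h1a.le
        _ = A ^ a * (I ^ (2 * (1 - a)) * K ^ (a - 1)) := by rw [h4]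
    have key : I ^ (s * a) ≤ A ^ a * K ^ (a - 1) := by
      have hIpow : (0:ℝ) < I ^ (2 * (1 - a)) := Real.rpow_pos_of_pos hIpos _
      rw [← mul_le_mul_iff_left₀ hIpow]
      calc I ^ (s * a) * I ^ (2 * (1 - a)) = I := by
            rw [← Real.rpow_add hIpos, hexp, Real.rpow_one]
        _ ≤ A ^ a * (I ^ (2 * (1 - a)) * K ^ (a - 1)) := hstep
        _ = A ^ a * K ^ (a - 1) * I ^ (2 * (1 - a)) := by ring
    -- raise to power 1/(s*a)
    have final : I ≤ (A ^ a * K ^ (a - 1)) ^ (1 / (s * a)) := by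
      have := Real.rpow_le_rpow (Real.rpow_nonneg hI _) key (by positivity : (0:ℝ) ≤ 1 / (s * a))
      rwa [← Real.rpow_mul hI, mul_one_div, div_self hsa.ne', Real.rpow_one] at this
    have hrhs : (A ^ a * K ^ (a - 1)) ^ (1 / (s * a)) =
        K ^ (-(1 - s) / s) * A ^ (1 / s) := by
      rw [Real.mul_rpow (Real.rpow_nonneg hA a) (Real.rpow_nonneg hK.le _),
        ← Real.rpow_mul hA, ← Real.rpow_mul hK.le]
      have ea : a * (1 / (s * a)) = 1 / s := by
        field_simp
      have eb : (a - 1) * (1 / (s * a)) = -(1 - s) / s := by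
        rw [ha]; field_simp; ring
      rw [ea, eb, mul_comm]
    rw [← hrhs]
    exact final
end

section
/- Let D₁, D₂, K₁, K₂, H > 0 and 0 < γ < 1 with γ²H² < D₁D₂, and A, B > 0. Define Q₁(Y) = A + γHY, Q₂(X) = B + γHX, and assume A² ≥ 4K₁D₁ and B² ≥ 4K₂D₂. Define g₁(Y) = (Q₁(Y)+√(Q₁(Y)²−4K₁D₁))/(2D₁), g₂(X) = (Q₂(X)+√(Q₂(X)²−4K₂D₂))/(2D₂), and F(X) = X − g₁(g₂(X)) for X ≥ 0. Then F(0) < 0 and F(X)/X → 1 − γ²H²/(D₁D₂) > 0 as X → +∞, so F has at least one positive zero; moreover X ↦ F(X)/X is strictly increasing on (0,∞), so the positive zero of F is unique. -/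
noncomputable def gfun (a d c m : ℝ) : ℝ → ℝ :=
  fun x => ((a + m * x) + Real.sqrt ((a + m * x) ^ 2 - c)) / (2 * d)

lemma gfun_arg_nonneg {a c m : ℝ} (ha : 0 < a) (hm : 0 < m) (hca : c ≤ a ^ 2)
    {x : ℝ} (hx : 0 ≤ x) : 0 ≤ (a + m * x) ^ 2 - c := by nlinarith [mul_nonneg hm.le hx]

lemma gfun_pos {a d c m : ℝ} (ha : 0 < a) (hd : 0 < d) (hm : 0 < m)
    {x : ℝ} (hx : 0 ≤ x) : 0 < gfun a d c m x := by
  have h1 : 0 < a + m * x := by nlinarith [mul_nonneg hm.le hx]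
  have h2 : 0 ≤ Real.sqrt ((a + m * x) ^ 2 - c) := Real.sqrt_nonneg _
  exact div_pos (by linarith) (by linarith)

lemma gfun_cont (a d c m : ℝ) : Continuous (gfun a d c m) := by
  unfold gfun
  fun_prop

lemma gfun_strictMonoOn {a d c m : ℝ} (ha : 0 < a) (hd : 0 < d) (hm : 0 < m) :
    StrictMonoOn (gfun a d c m) (Set.Ici 0) := by
  intro x hx y hy hxy
  simp only [Set.mem_Ici] at hx hy
  unfold gfun
  have h1 : a + m * x < a + m * y := by nlinarith
  have h2 : Real.sqrt ((a + m * x) ^ 2 - c) ≤ Real.sqrt ((a + m * y) ^ 2 - c) := by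
    apply Real.sqrt_le_sqrt
    nlinarith [mul_nonneg hm.le hx, mul_nonneg hm.le hy]
  rw [div_lt_div_iff₀ (by positivity) (by positivity)]
  nlinarith

lemma gfun_ratio_antiOn {a d c m : ℝ} (ha : 0 < a) (hd : 0 < d) (hm : 0 < m)
    (hc : 0 ≤ c) (hca : c ≤ a ^ 2) :
    StrictAntiOn (fun x => gfun a d c m x / x) (Set.Ioi 0) := by
  intro x hx y hy hxy
  simp only [Set.mem_Ioi] at hx hy
  simp only [gfun]
  rw [div_div, div_div, div_lt_div_iff₀ (by positivity) (by positivity)]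
  have sy := Real.sqrt_nonneg ((a + m * y) ^ 2 - c)
  have sx := Real.sqrt_nonneg ((a + m * x) ^ 2 - c)
  have key : x * Real.sqrt ((a + m * y) ^ 2 - c) ≤ y * Real.sqrt ((a + m * x) ^ 2 - c) := by
    have hxnn : (0:ℝ) ≤ x := hx.le
    have hynn : (0:ℝ) ≤ y := hy.le
    have h1 : 0 ≤ (a + m * x) ^ 2 - c := gfun_arg_nonneg ha hm hca hxnn
    have h2 : 0 ≤ (a + m * y) ^ 2 - c := gfun_arg_nonneg ha hm hca hynn
    rw [← Real.sqrt_sq (by positivity : (0:ℝ) ≤ x * Real.sqrt ((a + m * y) ^ 2 - c)),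
        ← Real.sqrt_sq (by positivity : (0:ℝ) ≤ y * Real.sqrt ((a + m * x) ^ 2 - c))]
    apply Real.sqrt_le_sqrt
    have e1 : (x * Real.sqrt ((a + m * y) ^ 2 - c)) ^ 2 = x ^ 2 * ((a + m * y) ^ 2 - c) := by
      rw [mul_pow, Real.sq_sqrt h2]
    have e2 : (y * Real.sqrt ((a + m * x) ^ 2 - c)) ^ 2 = y ^ 2 * ((a + m * x) ^ 2 - c) := by
      rw [mul_pow, Real.sq_sqrt h1]
    rw [e1, e2]
    nlinarith [mul_le_mul_of_nonneg_right hca (show (0:ℝ) ≤ y^2 - x^2 by nlinarith),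
      mul_nonneg (mul_nonneg (mul_nonneg ha.le hm.le) (mul_pos hx hy).le)
        (sub_nonneg.2 hxy.le)]
  nlinarith [mul_le_mul_of_nonneg_left key (by positivity : (0:ℝ) ≤ 2*d),
    mul_lt_mul_of_pos_left hxy (by positivity : (0:ℝ) < 2*d*a)]

lemma gfun_tendsto_atTop {a d c m : ℝ} (hd : 0 < d) (hm : 0 < m) :
    Filter.Tendsto (gfun a d c m) Filter.atTop Filter.atTop := by
  apply Filter.tendsto_atTop_mono (f := fun x => (a + m * x) / (2 * d))
  · intro x
    unfold gfun
    rw [div_le_div_iff₀ (by positivity) (by positivity)]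
    nlinarith [Real.sqrt_nonneg ((a + m * x) ^ 2 - c), sq_nonneg (a + m * x), hd]
  · apply Filter.Tendsto.atTop_div_const (by positivity)
    exact Filter.tendsto_atTop_add_const_left _ a
      (Filter.Tendsto.const_mul_atTop hm Filter.tendsto_id)

lemma gfun_ratio_tendsto {a d c m : ℝ} (ha : 0 < a) (hd : 0 < d) (hm : 0 < m)
    (hca : c ≤ a ^ 2) :
    Filter.Tendsto (fun x => gfun a d c m x / x) Filter.atTop (nhds (m / d)) := by
  have hev : ∀ᶠ x in Filter.atTop, ((a / x + m) + Real.sqrt ((a / x + m) ^ 2 - c / x ^ 2)) / (2 * d)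
      = gfun a d c m x / x := by
    filter_upwards [Filter.eventually_gt_atTop 0] with x hx
    unfold gfun
    have h1 : 0 ≤ (a + m * x) ^ 2 - c := gfun_arg_nonneg ha hm hca hx.le
    have e1 : a / x + m = (a + m * x) / x := by field_simp
    have e2 : (a / x + m) ^ 2 - c / x ^ 2 = ((a + m * x) ^ 2 - c) / x ^ 2 := by
      field_simp
      try ring
    rw [e2, e1, Real.sqrt_div h1, Real.sqrt_sq hx.le, ← add_div, div_div, div_div]
    ring_nf
  apply Filter.Tendsto.congr' hev
  have t0 : Filter.Tendsto (fun x : ℝ => a / x) Filter.atTop (nhds 0) :=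
    Filter.Tendsto.div_atTop tendsto_const_nhds Filter.tendsto_id
  have t1 : Filter.Tendsto (fun x : ℝ => a / x + m) Filter.atTop (nhds (0 + m)) :=
    t0.add tendsto_const_nhds
  have t2 : Filter.Tendsto (fun x : ℝ => c / x ^ 2) Filter.atTop (nhds 0) :=
    Filter.Tendsto.div_atTop tendsto_const_nhds (Filter.tendsto_pow_atTop (by norm_num))
  have t3 : Filter.Tendsto (fun x : ℝ => (a / x + m) ^ 2 - c / x ^ 2) Filter.atTop
      (nhds ((0 + m) ^ 2 - 0)) := (t1.pow 2).sub t2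
  have t4 : Filter.Tendsto (fun x : ℝ => Real.sqrt ((a / x + m) ^ 2 - c / x ^ 2)) Filter.atTop
      (nhds (Real.sqrt ((0 + m) ^ 2 - 0))) := (Real.continuous_sqrt.tendsto _).comp t3
  have t5 := (t1.add t4).div_const (2 * d)
  convert t5 using 2
  rw [sub_zero, zero_add, Real.sqrt_sq hm.le]
  field_simp
  ring

theorem fixed_point_existence_uniqueness (D₁ D₂ K₁ K₂ H A B γ : ℝ)
    (hD₁ : 0 < D₁) (hD₂ : 0 < D₂) (hK₁ : 0 < K₁) (hK₂ : 0 < K₂) (hH : 0 < H)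
    (hA : 0 < A) (hB : 0 < B) (hγ : 0 < γ) (hγ1 : γ < 1)
    (hcs : γ ^ 2 * H ^ 2 < D₁ * D₂)
    (hA2 : 4 * K₁ * D₁ ≤ A ^ 2) (hB2 : 4 * K₂ * D₂ ≤ B ^ 2)
    (Q₁ Q₂ g₁ g₂ F : ℝ → ℝ)
    (hQ₁ : ∀ Y, Q₁ Y = A + γ * H * Y) (hQ₂ : ∀ X, Q₂ X = B + γ * H * X)
    (hg₁ : ∀ Y, g₁ Y = (Q₁ Y + Real.sqrt ((Q₁ Y) ^ 2 - 4 * K₁ * D₁)) / (2 * D₁))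
    (hg₂ : ∀ X, g₂ X = (Q₂ X + Real.sqrt ((Q₂ X) ^ 2 - 4 * K₂ * D₂)) / (2 * D₂))
    (hF : ∀ X, F X = X - g₁ (g₂ X)) :
    F 0 < 0 ∧
    Filter.Tendsto (fun X => F X / X) Filter.atTop
      (nhds (1 - γ ^ 2 * H ^ 2 / (D₁ * D₂))) ∧
    0 < 1 - γ ^ 2 * H ^ 2 / (D₁ * D₂) ∧
    StrictMonoOn (fun X => F X / X) (Set.Ioi (0 : ℝ)) ∧
    (∃! X : ℝ, 0 < X ∧ F X = 0) := by
  have hm : 0 < γ * H := mul_pos hγ hH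
  have hg₁G : ∀ Y, g₁ Y = gfun A D₁ (4 * K₁ * D₁) (γ * H) Y := by
    intro Y; rw [hg₁, hQ₁]; rfl
  have hg₂G : ∀ X, g₂ X = gfun B D₂ (4 * K₂ * D₂) (γ * H) X := by
    intro X; rw [hg₂, hQ₂]; rfl
  have hFG : ∀ X, F X = X - gfun A D₁ (4 * K₁ * D₁) (γ * H)
      (gfun B D₂ (4 * K₂ * D₂) (γ * H) X) := by
    intro X; rw [hF, hg₁G, hg₂G]
  set c₁ := 4 * K₁ * D₁ with hc₁def
  set c₂ := 4 * K₂ * D₂ with hc₂def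
  set G₁ := gfun A D₁ c₁ (γ * H) with hG₁def
  set G₂ := gfun B D₂ c₂ (γ * H) with hG₂def
  have hG₂pos : ∀ x : ℝ, 0 ≤ x → 0 < G₂ x := fun x hx => gfun_pos hB hD₂ hm hx
  have hG₁pos : ∀ y : ℝ, 0 ≤ y → 0 < G₁ y := fun y hy => gfun_pos hA hD₁ hm hy
  -- Part 1 : F 0 < 0
  have part1 : F 0 < 0 := by
    rw [hFG 0]
    have := hG₁pos (G₂ 0) (hG₂pos 0 le_rfl).le
    linarith
  -- ratio decomposition
  have hratio : ∀ x : ℝ, 0 < x →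
      G₁ (G₂ x) / x = (G₁ (G₂ x) / G₂ x) * (G₂ x / x) := by
    intro x hx
    rw [div_mul_div_comm, mul_comm (G₂ x) x, mul_div_mul_right _ _ (hG₂pos x hx.le).ne']
  -- Part 2 : the limit
  have t₂top : Filter.Tendsto G₂ Filter.atTop Filter.atTop := gfun_tendsto_atTop hD₂ hm
  have t₂ : Filter.Tendsto (fun x => G₂ x / x) Filter.atTop (nhds (γ * H / D₂)) :=
    gfun_ratio_tendsto hB hD₂ hm hB2
  have t₁' : Filter.Tendsto (fun y => G₁ y / y) Filter.atTop (nhds (γ * H / D₁)) :=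
    gfun_ratio_tendsto hA hD₁ hm hA2
  have t₁ : Filter.Tendsto (fun x => G₁ (G₂ x) / G₂ x) Filter.atTop (nhds (γ * H / D₁)) :=
    t₁'.comp t₂top
  have tprod : Filter.Tendsto (fun x => G₁ (G₂ x) / x) Filter.atTop
      (nhds (γ ^ 2 * H ^ 2 / (D₁ * D₂))) := by
    have := t₁.mul t₂
    have heq : γ * H / D₁ * (γ * H / D₂) = γ ^ 2 * H ^ 2 / (D₁ * D₂) := by
      field_simp
    rw [heq] at this
    apply this.congr'
    filter_upwards [Filter.eventually_gt_atTop 0] with x hx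
    exact (hratio x hx).symm
  have part2 : Filter.Tendsto (fun X => F X / X) Filter.atTop
      (nhds (1 - γ ^ 2 * H ^ 2 / (D₁ * D₂))) := by
    have := (tendsto_const_nhds (x := (1:ℝ)) (f := Filter.atTop)).sub tprod
    apply this.congr'
    filter_upwards [Filter.eventually_gt_atTop 0] with x hx
    rw [hFG x, sub_div, div_self hx.ne']
  -- Part 3
  have part3 : 0 < 1 - γ ^ 2 * H ^ 2 / (D₁ * D₂) := by
    rw [sub_pos, div_lt_one (by positivity)]
    exact hcs
  -- Part 4 : strict monotonicity of F X / X on (0, ∞)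
  have hanti : StrictAntiOn (fun x => G₁ (G₂ x) / x) (Set.Ioi 0) := by
    intro x hx y hy hxy
    simp only [Set.mem_Ioi] at hx hy
    have hG₂mono : G₂ x < G₂ y :=
      gfun_strictMonoOn hB hD₂ hm (Set.mem_Ici.2 hx.le) (Set.mem_Ici.2 hy.le) hxy
    have h1 : G₁ (G₂ y) / G₂ y < G₁ (G₂ x) / G₂ x :=
      gfun_ratio_antiOn hA hD₁ hm (by positivity) hA2 (Set.mem_Ioi.2 (hG₂pos x hx.le))
        (Set.mem_Ioi.2 ((hG₂pos x hx.le).trans hG₂mono)) hG₂mono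
    have h2 : G₂ y / y < G₂ x / x :=
      gfun_ratio_antiOn hB hD₂ hm (by positivity) hB2 (Set.mem_Ioi.2 hx) (Set.mem_Ioi.2 hy) hxy
    have hp1 : 0 ≤ G₁ (G₂ y) / G₂ y :=
      le_of_lt (div_pos (hG₁pos _ (hG₂pos y hy.le).le) (hG₂pos y hy.le))
    have hp2 : 0 ≤ G₂ y / y := le_of_lt (div_pos (hG₂pos y hy.le) hy)
    show G₁ (G₂ y) / y < G₁ (G₂ x) / x
    rw [hratio x hx, hratio y hy]
    exact mul_lt_mul'' h1 h2 hp1 hp2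
  have part4 : StrictMonoOn (fun X => F X / X) (Set.Ioi (0 : ℝ)) := by
    intro x hx y hy hxy
    have h := hanti hx hy hxy
    simp only [Set.mem_Ioi] at hx hy
    simp only
    rw [hFG x, hFG y, sub_div, sub_div, div_self hx.ne', div_self hy.ne']
    linarith
  -- Part 5 : existence and uniqueness
  have hFcont : Continuous F := by
    have : F = fun X => X - G₁ (G₂ X) := funext hFG
    rw [this]
    exact continuous_id.sub ((gfun_cont A D₁ c₁ (γ * H)).comp (gfun_cont B D₂ c₂ (γ * H)))
  have hev : ∀ᶠ X in Filter.atTop, 0 < F X / X :=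
    part2.eventually (eventually_gt_nhds part3)
  obtain ⟨X₀, hX₀ratio, hX₀pos⟩ := (hev.and (Filter.eventually_gt_atTop 0)).exists
  have hFX₀ : 0 < F X₀ := by
    have := mul_pos hX₀ratio hX₀pos
    rwa [div_mul_cancel₀ _ hX₀pos.ne'] at this
  obtain ⟨c, hcmem, hFc⟩ := intermediate_value_Icc hX₀pos.le hFcont.continuousOn
    (Set.mem_Icc.2 ⟨part1.le, hFX₀.le⟩)
  have hcpos : 0 < c := by
    rcases lt_or_eq_of_le hcmem.1 with h | h
    · exact h
    · exfalso; rw [← h] at hFc; exact part1.ne hFc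
  refine ⟨part1, part2, part3, part4, c, ⟨hcpos, hFc⟩, ?_⟩
  rintro y ⟨hy, hFy⟩
  have : F y / y = F c / c := by rw [hFy, hFc, zero_div, zero_div]
  exact part4.injOn (Set.mem_Ioi.2 hy) (Set.mem_Ioi.2 hcpos) this
end

section
/- Suppose a nonnegative C² function W on {x ∈ ℝ² : |x| ≥ R} satisfies ΔW ≥ m² W for some m > 0, and W(x) → 0 as |x| → ∞. Then for every ε ∈ (0,1) there is a constant C > 0 with W(x) ≤ C e^{−m(1−ε)|x|} for all |x| ≥ R. -/
open Filter

noncomputable def laplacian (U : EuclideanSpace ℝ (Fin 2) → ℝ)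
    (x : EuclideanSpace ℝ (Fin 2)) : ℝ :=
  ∑ i : Fin 2,
    fderiv ℝ (fun y => fderiv ℝ U y (EuclideanSpace.single i 1)) x (EuclideanSpace.single i 1)

section Helpers
open Set

abbrev E2 := EuclideanSpace ℝ (Fin 2)

lemma secondDeriv_nonpos_of_isLocalMax {f : ℝ → ℝ} {L : ℝ}
    (hf : ∀ᶠ t in nhds (0:ℝ), DifferentiableAt ℝ f t)
    (hL : HasDerivAt (deriv f) L 0) (hmax : IsLocalMax f 0) : L ≤ 0 := by
  by_contra hc
  push_neg at hc
  have hd0 : deriv f 0 = 0 := hmax.deriv_eq_zero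
  have hslope : Tendsto (slope (deriv f) 0) (nhdsWithin 0 {(0:ℝ)}ᶜ) (nhds L) :=
    hasDerivAt_iff_tendsto_slope.1 hL
  have hslope' : Tendsto (slope (deriv f) 0) (nhdsWithin 0 (Ioi 0)) (nhds L) :=
    hslope.mono_left (nhdsWithin_mono _ (fun t ht => ne_of_gt ht))
  have h1 : ∀ᶠ t in nhdsWithin 0 (Ioi 0), 0 < deriv f t := by
    filter_upwards [hslope'.eventually (eventually_gt_nhds hc),
      self_mem_nhdsWithin] with t ht ht0
    have : slope (deriv f) 0 t = deriv f t / t := by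
      simp [slope, hd0]; ring
    rw [this] at ht
    have := mul_pos ht (show (0:ℝ) < t from ht0)
    rwa [div_mul_cancel₀ _ (ne_of_gt ht0)] at this
  rw [eventually_nhdsWithin_iff] at h1
  obtain ⟨δ1, hδ1pos, hδ1⟩ := Metric.eventually_nhds_iff.1 (h1.and (hf.and hmax))
  set δ := δ1 / 2 with hδ
  have hδpos : 0 < δ := by positivity
  have hmem : ∀ t ∈ Icc (0:ℝ) δ, dist t 0 < δ1 := by
    intro t ht
    rw [Real.dist_eq, sub_zero, abs_of_nonneg ht.1]
    linarith [ht.2]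
  have hmono : StrictMonoOn f (Icc 0 δ) := by
    apply strictMonoOn_of_deriv_pos (convex_Icc _ _)
    · intro t ht
      exact ((hδ1 (hmem t ht)).2.1).continuousAt.continuousWithinAt
    · intro t ht
      rw [interior_Icc] at ht
      exact (hδ1 (hmem t ⟨le_of_lt ht.1, le_of_lt ht.2⟩)).1 ht.1
  have h2 : f δ ≤ f 0 := (hδ1 (hmem δ ⟨le_of_lt hδpos, le_refl _⟩)).2.2
  have h3 : f 0 < f δ := hmono ⟨le_refl _, le_of_lt hδpos⟩ ⟨le_of_lt hδpos, le_refl _⟩ hδpos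
  linarith

lemma dir_second_nonpos {u : E2 → ℝ} {x v : E2}
    (hu : ContDiffAt ℝ 2 u x) (hmax : IsLocalMax u x) :
    fderiv ℝ (fun y => fderiv ℝ u y v) x v ≤ 0 := by
  set ℓ : ℝ → E2 := fun t => x + t • v with hℓdef
  have hℓ : ∀ t : ℝ, HasDerivAt ℓ v t := fun t => by
    simpa [hℓdef] using ((hasDerivAt_id t).smul_const v).const_add x
  have hℓ0 : ℓ 0 = x := by simp [hℓdef]
  have htend : Tendsto ℓ (nhds 0) (nhds x) := by
    have := (hℓ 0).continuousAt.tendsto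
    rwa [hℓ0] at this
  have hev : ∀ᶠ y in nhds x, ContDiffAt ℝ 2 u y := hu.eventually (by norm_num)
  set g : ℝ → ℝ := fun t => u (ℓ t) with hgdef
  have hg_hasderiv : ∀ᶠ t in nhds 0, HasDerivAt g (fderiv ℝ u (ℓ t) v) t := by
    filter_upwards [htend.eventually hev] with t ht
    exact ((ht.differentiableAt (by norm_num)).hasFDerivAt).comp_hasDerivAt t (hℓ t)
  have hg_diff : ∀ᶠ t in nhds 0, DifferentiableAt ℝ g t :=
    hg_hasderiv.mono fun t ht => ht.differentiableAt
  have hder_eq : deriv g =ᶠ[nhds 0] fun t => fderiv ℝ u (ℓ t) v :=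
    hg_hasderiv.mono fun t ht => ht.deriv
  -- differentiability of y ↦ fderiv u y v at x
  have hfd : DifferentiableAt ℝ (fderiv ℝ u) x :=
    (hu.fderiv_right (m := 1) (by norm_num)).differentiableAt one_ne_zero
  have h_comp : DifferentiableAt ℝ (fun y => fderiv ℝ u y v) x := by
    exact (ContinuousLinearMap.apply ℝ ℝ v).differentiableAt.comp x hfd
  have hL : HasDerivAt (fun t => fderiv ℝ u (ℓ t) v)
      (fderiv ℝ (fun y => fderiv ℝ u y v) x v) 0 := by
    have h0 : HasFDerivAt (fun y => fderiv ℝ u y v)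
        (fderiv ℝ (fun y => fderiv ℝ u y v) x) (ℓ 0) := by
      rw [hℓ0]; exact h_comp.hasFDerivAt
    exact h0.comp_hasDerivAt 0 (hℓ 0)
  have hLg : HasDerivAt (deriv g) (fderiv ℝ (fun y => fderiv ℝ u y v) x v) 0 :=
    hL.congr_of_eventuallyEq hder_eq
  have hgmax : IsLocalMax g 0 := by
    have := htend.eventually hmax
    unfold IsLocalMax IsMaxFilter
    simpa [hgdef, hℓ0] using this
  exact secondDeriv_nonpos_of_isLocalMax hg_diff hLg hgmax

lemma hasFDerivAt_norm2 {y : E2} (hy : y ≠ 0) :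
    HasFDerivAt (fun z : E2 => ‖z‖) (‖y‖⁻¹ • innerSL ℝ y) y := by
  have h1 : HasFDerivAt (fun z : E2 => ‖z‖^2) (2 • (innerSL ℝ y)) y :=
    (hasStrictFDerivAt_norm_sq y).hasFDerivAt
  have hne : ‖y‖^2 ≠ 0 := pow_ne_zero 2 (norm_ne_zero_iff.2 hy)
  have h2 := h1.sqrt hne
  have hs : Real.sqrt (‖y‖^2) = ‖y‖ := Real.sqrt_sq (norm_nonneg y)
  have heq : (fun z : E2 => Real.sqrt (‖z‖^2)) = fun z : E2 => ‖z‖ := by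
    funext z; exact Real.sqrt_sq (norm_nonneg z)
  rw [heq, hs] at h2
  refine h2.congr_fderiv ?_
  ext v
  simp [ContinuousLinearMap.smul_apply]
  have : ‖y‖ ≠ 0 := norm_ne_zero_iff.2 hy
  field_simp

variable {α : ℝ}

lemma hasFDerivAt_F (hα : 0 < α) {y : E2} (hy : y ≠ 0) :
    HasFDerivAt (fun z : E2 => Real.exp (-(α * ‖z‖)))
      ((-(α * Real.exp (-(α * ‖y‖))) * ‖y‖⁻¹) • innerSL ℝ y) y := by
  have h1 : HasFDerivAt (fun z : E2 => -(α * ‖z‖))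
      ((-α) • (‖y‖⁻¹ • innerSL ℝ y)) y := by
    have := ((hasFDerivAt_norm2 hy).const_mul α).neg
    exact this.congr_fderiv (neg_smul α _).symm
  have h2 := h1.exp
  refine h2.congr_fderiv ?_
  ext v; simp; ring_nf

lemma fderiv_F_apply (hα : 0 < α) {y : E2} (hy : y ≠ 0) (i : Fin 2) :
    fderiv ℝ (fun z : E2 => Real.exp (-(α * ‖z‖))) y (EuclideanSpace.single i 1)
      = -(α * Real.exp (-(α * ‖y‖))) * ‖y‖⁻¹ * y i := by
  rw [(hasFDerivAt_F hα hy).fderiv]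
  have : (inner ℝ y (EuclideanSpace.single i (1:ℝ)) : ℝ) = y i := by
    rw [EuclideanSpace.inner_single_right]; simp
  simp only [ContinuousLinearMap.smul_apply, innerSL_apply_apply, smul_eq_mul, this]

lemma fderiv_G_value (hα : 0 < α) {x : E2} (hx : x ≠ 0) (i : Fin 2) :
    fderiv ℝ (fun y : E2 => -α * Real.exp (-(α * ‖y‖)) * ‖y‖⁻¹ * y i) x
        (EuclideanSpace.single i 1)
      = α^2 * Real.exp (-(α * ‖x‖)) * (‖x‖⁻¹)^2 * (x i)^2
        + α * Real.exp (-(α * ‖x‖)) * (‖x‖⁻¹)^3 * (x i)^2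
        - α * Real.exp (-(α * ‖x‖)) * ‖x‖⁻¹ := by
  have hne : ‖x‖ ≠ 0 := norm_ne_zero_iff.2 hx
  have hA := (hasFDerivAt_F hα hx).const_mul (-α)
  have hB := (hasDerivAt_inv hne).comp_hasFDerivAt x (hasFDerivAt_norm2 hx)
  have hC : HasFDerivAt (fun y : E2 => y i) (EuclideanSpace.proj i (𝕜 := ℝ)) x :=
    (EuclideanSpace.proj i (𝕜 := ℝ)).hasFDerivAt
  have hG := (hA.fun_mul hB).fun_mul hC
  simp only [Function.comp_def] at hG
  rw [hG.fderiv]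
  have hsingle : (inner ℝ x (EuclideanSpace.single i (1:ℝ)) : ℝ) = x i := by
    rw [EuclideanSpace.inner_single_right]; simp
  have hproj : (EuclideanSpace.proj i (𝕜 := ℝ)) (EuclideanSpace.single i 1) = 1 := by
    simp [EuclideanSpace.single_apply]
  simp only [ContinuousLinearMap.add_apply, ContinuousLinearMap.smul_apply,
    innerSL_apply_apply, smul_eq_mul, hsingle, hproj, Function.comp]
  field_simp
  ring


lemma term_F_eq (hα : 0 < α) {x : E2} (hx : x ≠ 0) (i : Fin 2) :
    fderiv ℝ (fun y : E2 => fderiv ℝ (fun z : E2 => Real.exp (-(α * ‖z‖))) y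
        (EuclideanSpace.single i 1)) x (EuclideanSpace.single i 1)
      = fderiv ℝ (fun y : E2 => -α * Real.exp (-(α * ‖y‖)) * ‖y‖⁻¹ * y i) x
        (EuclideanSpace.single i 1) := by
  have hFG : (fun y : E2 => fderiv ℝ (fun z : E2 => Real.exp (-(α * ‖z‖))) y
      (EuclideanSpace.single i 1))
      =ᶠ[nhds x] (fun y : E2 => -α * Real.exp (-(α * ‖y‖)) * ‖y‖⁻¹ * y i) := by
    filter_upwards [IsOpen.mem_nhds isOpen_compl_singleton hx] with y hy
    rw [fderiv_F_apply hα hy]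
    ring
  rw [hFG.fderiv_eq]

lemma sum_sq_norm (x : E2) : x 0 ^ 2 + x 1 ^ 2 = ‖x‖ ^ 2 := by
  rw [EuclideanSpace.norm_eq, Real.sq_sqrt (by positivity)]
  simp [Fin.sum_univ_two, sq_abs]

lemma laplacian_F_eq (hα : 0 < α) {x : E2} (hx : x ≠ 0) :
    laplacian (fun z : E2 => Real.exp (-(α * ‖z‖))) x
      = α ^ 2 * Real.exp (-(α * ‖x‖)) - α * Real.exp (-(α * ‖x‖)) * ‖x‖⁻¹ := by
  have hr : (0:ℝ) < ‖x‖ := norm_pos_iff.2 hx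
  unfold laplacian
  rw [Fin.sum_univ_two, term_F_eq hα hx 0, term_F_eq hα hx 1,
    fderiv_G_value hα hx 0, fderiv_G_value hα hx 1]
  have hs := sum_sq_norm x
  have hx0 : x 0 ^ 2 = ‖x‖ ^ 2 - x 1 ^ 2 := by linarith
  rw [hx0]
  field_simp
  ring

lemma differentiableAt_G (hα : 0 < α) {x : E2} (hx : x ≠ 0) (i : Fin 2) :
    DifferentiableAt ℝ (fun y : E2 => -α * Real.exp (-(α * ‖y‖)) * ‖y‖⁻¹ * y i) x := by
  have hne : ‖x‖ ≠ 0 := norm_ne_zero_iff.2 hx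
  have hA := (hasFDerivAt_F hα hx).const_mul (-α)
  have hB := (hasDerivAt_inv hne).comp_hasFDerivAt x (hasFDerivAt_norm2 hx)
  have hC : HasFDerivAt (fun y : E2 => y i) (EuclideanSpace.proj i (𝕜 := ℝ)) x :=
    (EuclideanSpace.proj i (𝕜 := ℝ)).hasFDerivAt
  have hG := (hA.mul hB).mul hC
  simp only [Function.comp_def] at hG
  exact hG.differentiableAt

lemma contDiffAt_F (hα : 0 < α) {x : E2} (hx : x ≠ 0) :
    ContDiffAt ℝ 2 (fun z : E2 => Real.exp (-(α * ‖z‖))) x :=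
  ((contDiffAt_const (c := α)).mul (contDiffAt_norm ℝ hx)).neg.exp

lemma laplacian_sub (hα : 0 < α) (C : ℝ) {W : E2 → ℝ} {x : E2}
    (hx : x ≠ 0)
    (hWev : ∀ᶠ y in nhds x, ContDiffAt ℝ 2 W y) :
    laplacian (fun y => W y - C * Real.exp (-(α * ‖y‖))) x
      = laplacian W x - C * laplacian (fun y : E2 => Real.exp (-(α * ‖y‖))) x := by
  have key : ∀ i : Fin 2,
      fderiv ℝ (fun y : E2 => fderiv ℝ (fun z => W z - C * Real.exp (-(α * ‖z‖))) y
          (EuclideanSpace.single i 1)) x (EuclideanSpace.single i 1)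
        = fderiv ℝ (fun y : E2 => fderiv ℝ W y (EuclideanSpace.single i 1)) x
            (EuclideanSpace.single i 1)
          - C * fderiv ℝ (fun y : E2 => fderiv ℝ (fun z : E2 => Real.exp (-(α * ‖z‖))) y
              (EuclideanSpace.single i 1)) x (EuclideanSpace.single i 1) := by
    intro i
    have hE : (fun y : E2 => fderiv ℝ (fun z => W z - C * Real.exp (-(α * ‖z‖))) y
        (EuclideanSpace.single i 1))
        =ᶠ[nhds x] (fun y : E2 => fderiv ℝ W y (EuclideanSpace.single i 1)
          - C * (-α * Real.exp (-(α * ‖y‖)) * ‖y‖⁻¹ * y i)) := by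
      filter_upwards [hWev, IsOpen.mem_nhds isOpen_compl_singleton hx] with y hy hy0
      have hWd : DifferentiableAt ℝ W y := hy.differentiableAt two_ne_zero
      have hFd : DifferentiableAt ℝ (fun z : E2 => Real.exp (-(α * ‖z‖))) y :=
        (hasFDerivAt_F hα hy0).differentiableAt
      rw [fderiv_fun_sub hWd (hFd.const_mul C), fderiv_const_mul hFd C]
      simp only [ContinuousLinearMap.sub_apply, ContinuousLinearMap.smul_apply, smul_eq_mul]
      rw [fderiv_F_apply hα hy0 i]
      ring
    rw [hE.fderiv_eq]
    have hdW : DifferentiableAt ℝ (fun y : E2 => fderiv ℝ W y (EuclideanSpace.single i 1)) x := by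
      have hfd : DifferentiableAt ℝ (fderiv ℝ W) x :=
        ((hWev.self_of_nhds).fderiv_right (m := 1) (by norm_num)).differentiableAt one_ne_zero
      exact (ContinuousLinearMap.apply ℝ ℝ (EuclideanSpace.single i 1)).differentiableAt.comp x hfd
    have hdG := differentiableAt_G hα hx i
    rw [fderiv_fun_sub hdW (hdG.const_mul C), fderiv_const_mul hdG C]
    simp only [ContinuousLinearMap.sub_apply, ContinuousLinearMap.smul_apply, smul_eq_mul]
    rw [← term_F_eq hα hx i]
  unfold laplacian
  rw [Fin.sum_univ_two, Fin.sum_univ_two, Fin.sum_univ_two, key 0, key 1]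
  ring

end Helpers

open Set in
theorem exponential_decay_estimate (W : EuclideanSpace ℝ (Fin 2) → ℝ) (R m : ℝ)
    (hR : 0 < R) (hm : 0 < m)
    (hW : ContDiffOn ℝ 2 W {x | R ≤ ‖x‖})
    (hWnonneg : ∀ x, R ≤ ‖x‖ → 0 ≤ W x)
    (hΔ : ∀ x, R ≤ ‖x‖ → m ^ 2 * W x ≤ laplacian W x)
    (hdecay : Tendsto W (cocompact (EuclideanSpace ℝ (Fin 2))) (nhds 0)) :
    ∀ ε : ℝ, 0 < ε → ε < 1 → ∃ C : ℝ, 0 < C ∧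
      ∀ x, R ≤ ‖x‖ → W x ≤ C * Real.exp (-m * (1 - ε) * ‖x‖) := by
  intro ε hε0 hε1
  set α := m * (1 - ε) with hαdef
  have hα : 0 < α := mul_pos hm (by linarith)
  have hαm : α ≤ m := by nlinarith
  have hFpos : ∀ y : E2, 0 < Real.exp (-(α * ‖y‖)) := fun y => Real.exp_pos _
  have hsub : Metric.sphere (0:E2) R ⊆ {x : E2 | R ≤ ‖x‖} := by
    intro x hx
    rw [mem_sphere_zero_iff_norm] at hx
    simp [Set.mem_setOf_eq, hx]
  obtain ⟨M, hM⟩ := (isCompact_sphere (0:E2) R).exists_bound_of_continuousOn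
    ((hW.continuousOn).mono hsub)
  have hsph_ne : (Metric.sphere (0:E2) R).Nonempty := NormedSpace.sphere_nonempty.2 hR.le
  have hM0 : 0 ≤ M := by
    obtain ⟨z, hz⟩ := hsph_ne
    exact le_trans (norm_nonneg _) (hM z hz)
  set C := (M + 1) * Real.exp (α * R) with hCdef
  have hCpos : 0 < C := by positivity
  refine ⟨C, hCpos, ?_⟩
  set u : E2 → ℝ := fun y => W y - C * Real.exp (-(α * ‖y‖)) with hudef
  have hsphere : ∀ y : E2, ‖y‖ = R → u y < 0 := by
    intro y hy
    have h1 : W y ≤ M := by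
      have := hM y (by rw [mem_sphere_zero_iff_norm]; exact hy)
      exact le_trans (le_abs_self _) this
    have h2 : C * Real.exp (-(α * ‖y‖)) = M + 1 := by
      rw [hCdef, hy, mul_assoc, ← Real.exp_add]
      simp
    simp only [hudef, h2]
    linarith
  have hclaim : ∀ x : E2, R ≤ ‖x‖ → u x ≤ 0 := by
    by_contra hcon
    push_neg at hcon
    obtain ⟨x1, hx1R, hx1pos⟩ := hcon
    set δ := u x1 with hδdef
    have hδpos : 0 < δ := hx1pos
    have hsmall : ∀ᶠ x in Filter.cocompact E2, W x < δ :=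
      hdecay.eventually_lt_const hδpos
    obtain ⟨t, htc, hts⟩ := Filter.mem_cocompact.1 hsmall
    obtain ⟨r0, hr0⟩ := htc.isBounded.subset_closedBall 0
    set R2 := max r0 (max ‖x1‖ R) + 1 with hR2def
    have hR2x1 : ‖x1‖ ≤ R2 := le_trans (le_max_left _ _) (by
      rw [hR2def]
      have := le_max_right r0 (max ‖x1‖ R)
      linarith [le_max_left ‖x1‖ R, le_max_right r0 (max ‖x1‖ R)])
    have hR2R : R < R2 := by
      have h1 := le_max_right ‖x1‖ R
      have h2 := le_max_right r0 (max ‖x1‖ R)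
      rw [hR2def]; linarith
    have hfar : ∀ y : E2, R2 ≤ ‖y‖ → W y < δ := by
      intro y hy
      apply hts
      intro hmem
      have h1 : dist y 0 ≤ r0 := hr0 hmem
      rw [dist_zero_right] at h1
      have h2 := le_max_left r0 (max ‖x1‖ R)
      rw [hR2def] at hy
      linarith
    set A := Metric.closedBall (0:E2) R2 ∩ {y : E2 | R ≤ ‖y‖} with hAdef
    have hAc : IsCompact A := (isCompact_closedBall 0 R2).inter_right
      (isClosed_le continuous_const continuous_norm)
    have hx1A : x1 ∈ A := ⟨by rw [Metric.mem_closedBall, dist_zero_right]; exact hR2x1, hx1R⟩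
    have hFcont : Continuous fun y : E2 => C * Real.exp (-(α * ‖y‖)) := by
      continuity
    have hucont : ContinuousOn u A :=
      ((hW.continuousOn).mono inter_subset_right).sub hFcont.continuousOn
    obtain ⟨x0, hx0A, hx0max⟩ := hAc.exists_isMaxOn ⟨x1, hx1A⟩ hucont
    have hux0 : δ ≤ u x0 := hx0max hx1A
    have hx0R : R < ‖x0‖ := by
      have hle : R ≤ ‖x0‖ := hx0A.2
      rcases lt_or_eq_of_le hle with h | h
      · exact h
      · exact absurd (hsphere x0 h.symm) (by linarith)
    have hx0R2 : ‖x0‖ < R2 := by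
      by_contra h
      push_neg at h
      have h1 := hfar x0 h
      have h2 : u x0 ≤ W x0 := by
        simp only [hudef]
        nlinarith [hFpos x0]
      linarith
    have hx0ne : x0 ≠ 0 := by
      intro h
      rw [h, norm_zero] at hx0R
      linarith
    have hV : IsOpen {y : E2 | R < ‖y‖ ∧ ‖y‖ < R2} :=
      (isOpen_lt continuous_const continuous_norm).inter
        (isOpen_lt continuous_norm continuous_const)
    have hlocmax : IsLocalMax u x0 := by
      filter_upwards [hV.mem_nhds ⟨hx0R, hx0R2⟩] with y hy
      exact hx0max ⟨by rw [Metric.mem_closedBall, dist_zero_right]; exact hy.2.le, hy.1.le⟩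
    have hWx0 : ContDiffAt ℝ 2 W x0 := by
      apply hW.contDiffAt
      filter_upwards [(isOpen_lt continuous_const continuous_norm).mem_nhds hx0R] with y hy
      exact hy.le
    have hWev : ∀ᶠ y in nhds x0, ContDiffAt ℝ 2 W y := hWx0.eventually (by norm_num)
    have hux : ContDiffAt ℝ 2 u x0 :=
      hWx0.sub (contDiffAt_const.mul (contDiffAt_F hα hx0ne))
    have hlap_nonpos : laplacian u x0 ≤ 0 := by
      unfold laplacian
      apply Finset.sum_nonpos
      intro i _
      exact dir_second_nonpos hux hlocmax
    have hlap_eq : laplacian u x0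
        = laplacian W x0 - C * laplacian (fun y : E2 => Real.exp (-(α * ‖y‖))) x0 := by
      rw [hudef]
      exact laplacian_sub hα C hx0ne hWev
    have hlapF := laplacian_F_eq hα hx0ne
    have hΔW := hΔ x0 hx0R.le
    set e0 := Real.exp (-(α * ‖x0‖)) with he0
    set LF := laplacian (fun y : E2 => Real.exp (-(α * ‖y‖))) x0 with hLF
    set LW := laplacian W x0 with hLW
    set LU := laplacian u x0 with hLU
    have hFb : LF ≤ m ^ 2 * e0 := by
      rw [hlapF]
      have hr : (0:ℝ) < ‖x0‖ := by linarith
      have h1 : 0 < e0 := Real.exp_pos _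
      have h2 : 0 < ‖x0‖⁻¹ := inv_pos.2 hr
      have h4 : α ^ 2 ≤ m ^ 2 := pow_le_pow_left₀ hα.le hαm 2
      have h5 : α ^ 2 * e0 ≤ m ^ 2 * e0 := mul_le_mul_of_nonneg_right h4 h1.le
      have h6 : 0 < α * e0 * ‖x0‖⁻¹ := by positivity
      linarith
    have hux0' : 0 < u x0 := lt_of_lt_of_le hδpos hux0
    have hux0'' : u x0 = W x0 - C * e0 := by rw [hudef]
    have hm2 : 0 < m ^ 2 := pow_pos hm 2
    have hfinal : 0 < m ^ 2 * u x0 := mul_pos hm2 hux0'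
    have h3 : C * LF ≤ C * (m ^ 2 * e0) := mul_le_mul_of_nonneg_left hFb hCpos.le
    have hexpand : m ^ 2 * (W x0 - C * e0) = m ^ 2 * W x0 - C * (m ^ 2 * e0) := by ring
    have hmain : m ^ 2 * u x0 ≤ LU := by
      rw [hlap_eq, hux0'', hexpand]
      linarith
    exact absurd (le_trans hmain hlap_nonpos) (not_le.2 hfinal)
  intro x hx
  have h := hclaim x hx
  have heq : Real.exp (-m * (1 - ε) * ‖x‖) = Real.exp (-(α * ‖x‖)) := by
    congr 1
    rw [hαdef]
    ring
  rw [heq]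
  simp only [hudef] at h
  linarith
end
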